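/- Let A = !![a₁,a₂,a₃; b₁,b₂,b₃; c₁,c₂,c₃] be a real 3×3 matrix with D := det A ≠ 0. Let (xᵢ,yᵢ,pᵢ,qᵢ) ∈ ℝ⁴ for i = 1,…,4 with hᵢ := c₁xᵢ+c₂yᵢ+c₃ ≠ 0, and let (x̃ᵢ,ỹᵢ,p̃ᵢ,q̃ᵢ) be the prolonged transform of the i-th data. Then z₄ := Δ₁₂₃Δ₁₂₄Δ₁₃₄Δ₂₃₄ is a relative invariant of weight −1 for the diagonal action on 4 points: D⁴ · z̃₄ = (h₁h₂h₃h₄)³ · z₄, where z̃₄ is computed from the transformed data; equivalently z̃₄ = J(T)⁻¹ z₄ with total Jacobian J(T) = D⁴/(h₁h₂h₃h₄)³. -/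

import Mathlib

open Matrix

/-- The gradient line `ℓ = (p, q, -p*x - q*y)` of the data `(x, y, p, q)`. -/
noncomputable def gradLine (x y p q : ℝ) : Fin 3 → ℝ := ![p, q, -(p * x) - q * y]

/-- Determinant of the 3×3 matrix with rows `v₁, v₂, v₃`. -/
noncomputable def det3 (v₁ v₂ v₃ : Fin 3 → ℝ) : ℝ := Matrix.det (Matrix.of ![v₁, v₂, v₃])

lemma det3_smul (r s t : ℝ) (u v w : Fin 3 → ℝ) :
    det3 (r • u) (s • v) (t • w) = r * s * t * det3 u v w := by
  simp [det3, Matrix.det_fin_three]; ring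

lemma det3_vecMul (M : Matrix (Fin 3) (Fin 3) ℝ) (u v w : Fin 3 → ℝ) :
    det3 (vecMul u M) (vecMul v M) (vecMul w M) = det3 u v w * M.det := by
  have h : Matrix.of ![vecMul u M, vecMul v M, vecMul w M] = Matrix.of ![u, v, w] * M := by
    ext i j
    fin_cases i <;> simp [Matrix.mul_apply, Matrix.vecMul, dotProduct, Fin.sum_univ_three]
  rw [det3, h, Matrix.det_mul, det3]

lemma key (a1 a2 a3 b1 b2 b3 c1 c2 c3 : ℝ)
    (hD : Matrix.det !![a1, a2, a3; b1, b2, b3; c1, c2, c3] ≠ 0)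
    (x y p q : ℝ) (hh : (c1 * x + c2 * y + c3) ≠ 0) :
    gradLine ((a1 * x + a2 * y + a3) / (c1 * x + c2 * y + c3))
      ((b1 * x + b2 * y + b3) / (c1 * x + c2 * y + c3))
      (((c1 * x + c2 * y + c3) • vecMul (gradLine x y p q) (!![a1, a2, a3; b1, b2, b3; c1, c2, c3])⁻¹) 0)
      (((c1 * x + c2 * y + c3) • vecMul (gradLine x y p q) (!![a1, a2, a3; b1, b2, b3; c1, c2, c3])⁻¹) 1)
    = (c1 * x + c2 * y + c3) • vecMul (gradLine x y p q) (!![a1, a2, a3; b1, b2, b3; c1, c2, c3])⁻¹ := by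
  set A := !![a1, a2, a3; b1, b2, b3; c1, c2, c3] with hA
  set u := vecMul (gradLine x y p q) A⁻¹ with hu
  have hAinv : vecMul u A = gradLine x y p q := by
    rw [hu, vecMul_vecMul, Matrix.nonsing_inv_mul A (isUnit_iff_ne_zero.mpr hD), vecMul_one]
  have e0 : u 0 * a1 + u 1 * b1 + u 2 * c1 = p := by
    have := congrFun hAinv 0
    simpa [vecMul, dotProduct, Fin.sum_univ_three, hA, gradLine] using this
  have e1 : u 0 * a2 + u 1 * b2 + u 2 * c2 = q := by
    have := congrFun hAinv 1
    simpa [vecMul, dotProduct, Fin.sum_univ_three, hA, gradLine] using this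
  have e2 : u 0 * a3 + u 1 * b3 + u 2 * c3 = -(p * x) - q * y := by
    have := congrFun hAinv 2
    simpa [vecMul, dotProduct, Fin.sum_univ_three, hA, gradLine] using this
  funext i
  fin_cases i
  · simp [gradLine]
  · simp [gradLine]
  · show -((((c1 * x + c2 * y + c3) • u) 0) * _) - (((c1 * x + c2 * y + c3) • u) 1) * _ = ((c1 * x + c2 * y + c3) • u) 2
    simp only [Pi.smul_apply, smul_eq_mul]
    have goal2 : -(u 0 * (a1 * x + a2 * y + a3)) - u 1 * (b1 * x + b2 * y + b3)
        = (c1 * x + c2 * y + c3) * u 2 := by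
      linear_combination (-x) * e0 + (-y) * e1 - e2
    field_simp
    linear_combination goal2

theorem z4_is_relative_invariant_weight_neg_one
    (a1 a2 a3 b1 b2 b3 c1 c2 c3 : ℝ)
    (hD : Matrix.det !![a1, a2, a3; b1, b2, b3; c1, c2, c3] ≠ 0)
    (x1 y1 p1 q1 x2 y2 p2 q2 x3 y3 p3 q3 x4 y4 p4 q4 : ℝ)
    (hh1 : (c1 * x1 + c2 * y1 + c3) ≠ 0)
    (hh2 : (c1 * x2 + c2 * y2 + c3) ≠ 0)
    (hh3 : (c1 * x3 + c2 * y3 + c3) ≠ 0)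
    (hh4 : (c1 * x4 + c2 * y4 + c3) ≠ 0)
    (xt1 yt1 pt1 qt1 xt2 yt2 pt2 qt2 xt3 yt3 pt3 qt3 xt4 yt4 pt4 qt4 : ℝ)
    (hxt1 : xt1 = (a1 * x1 + a2 * y1 + a3) / (c1 * x1 + c2 * y1 + c3))
    (hyt1 : yt1 = (b1 * x1 + b2 * y1 + b3) / (c1 * x1 + c2 * y1 + c3))
    (hpt1 : pt1 = ((c1 * x1 + c2 * y1 + c3) • Matrix.vecMul (gradLine x1 y1 p1 q1) (!![a1, a2, a3; b1, b2, b3; c1, c2, c3])⁻¹) 0)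
    (hqt1 : qt1 = ((c1 * x1 + c2 * y1 + c3) • Matrix.vecMul (gradLine x1 y1 p1 q1) (!![a1, a2, a3; b1, b2, b3; c1, c2, c3])⁻¹) 1)
    (hxt2 : xt2 = (a1 * x2 + a2 * y2 + a3) / (c1 * x2 + c2 * y2 + c3))
    (hyt2 : yt2 = (b1 * x2 + b2 * y2 + b3) / (c1 * x2 + c2 * y2 + c3))
    (hpt2 : pt2 = ((c1 * x2 + c2 * y2 + c3) • Matrix.vecMul (gradLine x2 y2 p2 q2) (!![a1, a2, a3; b1, b2, b3; c1, c2, c3])⁻¹) 0)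
    (hqt2 : qt2 = ((c1 * x2 + c2 * y2 + c3) • Matrix.vecMul (gradLine x2 y2 p2 q2) (!![a1, a2, a3; b1, b2, b3; c1, c2, c3])⁻¹) 1)
    (hxt3 : xt3 = (a1 * x3 + a2 * y3 + a3) / (c1 * x3 + c2 * y3 + c3))
    (hyt3 : yt3 = (b1 * x3 + b2 * y3 + b3) / (c1 * x3 + c2 * y3 + c3))
    (hpt3 : pt3 = ((c1 * x3 + c2 * y3 + c3) • Matrix.vecMul (gradLine x3 y3 p3 q3) (!![a1, a2, a3; b1, b2, b3; c1, c2, c3])⁻¹) 0)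
    (hqt3 : qt3 = ((c1 * x3 + c2 * y3 + c3) • Matrix.vecMul (gradLine x3 y3 p3 q3) (!![a1, a2, a3; b1, b2, b3; c1, c2, c3])⁻¹) 1)
    (hxt4 : xt4 = (a1 * x4 + a2 * y4 + a3) / (c1 * x4 + c2 * y4 + c3))
    (hyt4 : yt4 = (b1 * x4 + b2 * y4 + b3) / (c1 * x4 + c2 * y4 + c3))
    (hpt4 : pt4 = ((c1 * x4 + c2 * y4 + c3) • Matrix.vecMul (gradLine x4 y4 p4 q4) (!![a1, a2, a3; b1, b2, b3; c1, c2, c3])⁻¹) 0)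
    (hqt4 : qt4 = ((c1 * x4 + c2 * y4 + c3) • Matrix.vecMul (gradLine x4 y4 p4 q4) (!![a1, a2, a3; b1, b2, b3; c1, c2, c3])⁻¹) 1) :
    Matrix.det !![a1, a2, a3; b1, b2, b3; c1, c2, c3] ^ 4 * ((det3 (gradLine xt1 yt1 pt1 qt1) (gradLine xt2 yt2 pt2 qt2) (gradLine xt3 yt3 pt3 qt3)) * (det3 (gradLine xt1 yt1 pt1 qt1) (gradLine xt2 yt2 pt2 qt2) (gradLine xt4 yt4 pt4 qt4)) * (det3 (gradLine xt1 yt1 pt1 qt1) (gradLine xt3 yt3 pt3 qt3) (gradLine xt4 yt4 pt4 qt4)) * (det3 (gradLine xt2 yt2 pt2 qt2) (gradLine xt3 yt3 pt3 qt3) (gradLine xt4 yt4 pt4 qt4)))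
      = ((c1 * x1 + c2 * y1 + c3) * (c1 * x2 + c2 * y2 + c3) * (c1 * x3 + c2 * y3 + c3) * (c1 * x4 + c2 * y4 + c3)) ^ 3 * ((det3 (gradLine x1 y1 p1 q1) (gradLine x2 y2 p2 q2) (gradLine x3 y3 p3 q3)) * (det3 (gradLine x1 y1 p1 q1) (gradLine x2 y2 p2 q2) (gradLine x4 y4 p4 q4)) * (det3 (gradLine x1 y1 p1 q1) (gradLine x3 y3 p3 q3) (gradLine x4 y4 p4 q4)) * (det3 (gradLine x2 y2 p2 q2) (gradLine x3 y3 p3 q3) (gradLine x4 y4 p4 q4))) := by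
  
  subst hxt1 hyt1 hpt1 hqt1 hxt2 hyt2 hpt2 hqt2 hxt3 hyt3 hpt3 hqt3 hxt4 hyt4 hpt4 hqt4
  rw [key a1 a2 a3 b1 b2 b3 c1 c2 c3 hD x1 y1 p1 q1 hh1,
      key a1 a2 a3 b1 b2 b3 c1 c2 c3 hD x2 y2 p2 q2 hh2,
      key a1 a2 a3 b1 b2 b3 c1 c2 c3 hD x3 y3 p3 q3 hh3,
      key a1 a2 a3 b1 b2 b3 c1 c2 c3 hD x4 y4 p4 q4 hh4]
  rw [det3_smul, det3_smul, det3_smul, det3_smul,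
      det3_vecMul, det3_vecMul, det3_vecMul, det3_vecMul,
      Matrix.det_nonsing_inv]
  rw [Ring.inverse_eq_inv']
  generalize Matrix.det !![a1, a2, a3; b1, b2, b3; c1, c2, c3] = D at hD ⊢
  generalize det3 (gradLine x1 y1 p1 q1) (gradLine x2 y2 p2 q2) (gradLine x3 y3 p3 q3) = d1
  generalize det3 (gradLine x1 y1 p1 q1) (gradLine x2 y2 p2 q2) (gradLine x4 y4 p4 q4) = d2
  generalize det3 (gradLine x1 y1 p1 q1) (gradLine x3 y3 p3 q3) (gradLine x4 y4 p4 q4) = d3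
  generalize det3 (gradLine x2 y2 p2 q2) (gradLine x3 y3 p3 q3) (gradLine x4 y4 p4 q4) = d4
  generalize c1 * x1 + c2 * y1 + c3 = h1 at hh1 ⊢
  generalize c1 * x2 + c2 * y2 + c3 = h2 at hh2 ⊢
  generalize c1 * x3 + c2 * y3 + c3 = h3 at hh3 ⊢
  generalize c1 * x4 + c2 * y4 + c3 = h4 at hh4 ⊢
  field_simp
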